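/- Fix any constant K > 0 and define the perfect-SIC outage probability as P(ρ) = F(√(K/ρ)) for ρ > 0. Then the diversity order equals (μ₀+1)/2, i.e. −lim_{ρ→∞} log P(ρ) / log ρ = (μ₀+1)/2. -/

import Mathlib

open MeasureTheory ProbabilityTheory Topology Filter

/-- Lower incomplete gamma function `γ(s, x) = ∫₀ˣ t^{s-1} e^{-t} dt`. -/
noncomputable def lowerGamma (s x : ℝ) : ℝ := ∫ t in (0:ℝ)..x, t ^ (s - 1) * Real.exp (-t)

/-- `μ₀ = ((M+1)π² − 16)/(16 − π²)`. -/
noncomputable def mu0 (M : ℕ) : ℝ := (((M : ℝ) + 1) * Real.pi ^ 2 - 16) / (16 - Real.pi ^ 2)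

/-- `φ₀ = (16 − π²)/(4π)`. -/
noncomputable def phi0 : ℝ := (16 - Real.pi ^ 2) / (4 * Real.pi)

/-- The CDF of the Gamma distribution with shape `μ₀+1` and scale `φ₀`:
`F(x) = γ(μ₀+1, x/φ₀)/Γ(μ₀+1)`. -/
noncomputable def F (M : ℕ) (x : ℝ) : ℝ :=
  lowerGamma (mu0 M + 1) (x / phi0) / Real.Gamma (mu0 M + 1)

open intervalIntegral

lemma rpow_integral' (s x : ℝ) (hs : 0 < s) :
    ∫ t in (0:ℝ)..x, t ^ (s - 1) = x ^ s / s := by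
  rw [integral_rpow (Or.inl (by linarith))]
  rw [Real.zero_rpow (by linarith : s - 1 + 1 ≠ 0)]
  ring_nf

lemma intInt (s x : ℝ) (hs : 0 < s) : IntervalIntegrable (fun t => t ^ (s-1)) volume 0 x :=
  intervalIntegral.intervalIntegrable_rpow' (by linarith)

lemma intInt2 (s x : ℝ) (hs : 0 < s) :
    IntervalIntegrable (fun t => t ^ (s-1) * Real.exp (-t)) volume 0 x :=
  (intInt s x hs).mul_continuousOn (Continuous.continuousOn (by continuity))

lemma lowerGamma_le (s x : ℝ) (hs : 0 < s) (hx : 0 < x) :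
    lowerGamma s x ≤ x ^ s / s := by
  rw [lowerGamma, ← rpow_integral' s x hs]
  apply intervalIntegral.integral_mono_on hx.le (intInt2 s x hs) (intInt s x hs)
  intro t ht
  have h1 : (0:ℝ) ≤ t ^ (s-1) := Real.rpow_nonneg ht.1 _
  have h2 : Real.exp (-t) ≤ 1 := Real.exp_le_one_iff.2 (by linarith [ht.1])
  nlinarith [Real.exp_pos (-t)]

lemma le_lowerGamma (s x : ℝ) (hs : 0 < s) (hx : 0 < x) :
    Real.exp (-x) * (x ^ s / s) ≤ lowerGamma s x := by
  have h : Real.exp (-x) * (x ^ s / s) = ∫ t in (0:ℝ)..x, t ^ (s - 1) * Real.exp (-x) := by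
    rw [intervalIntegral.integral_mul_const, rpow_integral' s x hs]; ring
  rw [h, lowerGamma]
  apply intervalIntegral.integral_mono_on hx.le ((intInt s x hs).mul_const _) (intInt2 s x hs)
  intro t ht
  have h1 : (0:ℝ) ≤ t ^ (s-1) := Real.rpow_nonneg ht.1 _
  have h2 : Real.exp (-x) ≤ Real.exp (-t) := Real.exp_le_exp.2 (by linarith [ht.2])
  nlinarith

/-- **Diversity order under perfect SIC**: for `P(ρ) = F(√(K/ρ))`, the diversity order
`−lim_{ρ→∞} log P(ρ)/log ρ` equals `(μ₀+1)/2`, i.e.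
`log P(ρ)/log ρ → −(μ₀+1)/2` as `ρ → ∞`. -/
theorem diversity_order_pSIC
    (M : ℕ) (hM : 0 < M) (K : ℝ) (hK : 0 < K) :
    Filter.Tendsto
      (fun rho : ℝ => Real.log (F M (Real.sqrt (K / rho))) / Real.log rho)
      Filter.atTop (𝓝 (-((mu0 M + 1) / 2))) := by
  have hpi := Real.pi_pos
  have hden : (0:ℝ) < 16 - Real.pi ^ 2 := by nlinarith [Real.pi_lt_d2]
  set s : ℝ := mu0 M + 1 with hs_def
  have hs : 0 < s := by
    have h : s = (M : ℝ) * Real.pi ^ 2 / (16 - Real.pi ^ 2) := by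
      rw [hs_def, mu0]; field_simp; ring
    rw [h]
    have hM' : (0:ℝ) < M := by exact_mod_cast hM
    positivity
  have hc : 0 < phi0 := by rw [phi0]; positivity
  have hΓ : 0 < Real.Gamma s := Real.Gamma_pos_of_pos hs
  -- notation
  set X : ℝ → ℝ := fun rho => Real.sqrt (K / rho) / phi0 with hX
  set D : ℝ := s * (Real.log K / 2 - Real.log phi0) - Real.log s - Real.log (Real.Gamma s)
    with hD
  -- limits of auxiliary functions
  have hinv : Tendsto (fun rho : ℝ => (Real.log rho)⁻¹) atTop (𝓝 0) :=
    Real.tendsto_log_atTop.inv_tendsto_atTop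
  have hX0 : Tendsto X atTop (𝓝 0) := by
    have h1 : Tendsto (fun rho : ℝ => K / rho) atTop (𝓝 0) :=
      tendsto_const_nhds.div_atTop tendsto_id
    have h2 : Tendsto (fun rho : ℝ => Real.sqrt (K / rho)) atTop (𝓝 0) := by
      have := (Real.continuous_sqrt.tendsto 0).comp h1
      simpa [Function.comp_def] using this
    have := h2.div_const phi0
    simpa using this
  have hU : Tendsto (fun rho : ℝ => -(s/2) + D * (Real.log rho)⁻¹) atTop (𝓝 (-(s/2))) := by
    have := (hinv.const_mul D).const_add (-(s/2))
    simpa using this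
  have hL : Tendsto (fun rho : ℝ => -(s/2) + D * (Real.log rho)⁻¹ - X rho * (Real.log rho)⁻¹)
      atTop (𝓝 (-(s/2))) := by
    have := hU.sub (hX0.mul hinv)
    simpa using this
  have hgoal : -((mu0 M + 1)/2) = -(s/2) := by rw [hs_def]
  rw [hgoal]
  apply tendsto_of_tendsto_of_tendsto_of_le_of_le' hL hU
  · -- lower bound
    filter_upwards [eventually_gt_atTop 1] with rho hrho
    have hrho0 : (0:ℝ) < rho := by linarith
    have hlog : 0 < Real.log rho := Real.log_pos hrho
    have hxp : 0 < X rho := by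
      have : 0 < Real.sqrt (K / rho) := Real.sqrt_pos.2 (by positivity)
      simp only [hX]; positivity
    have hFval : F M (Real.sqrt (K / rho)) = lowerGamma s (X rho) / Real.Gamma s := rfl
    have hγlb := le_lowerGamma s (X rho) hs hxp
    have hγub := lowerGamma_le s (X rho) hs hxp
    have hγpos : 0 < lowerGamma s (X rho) := by
      have : 0 < Real.exp (-(X rho)) * ((X rho) ^ s / s) := by positivity
      linarith
    have hlogF : Real.log (F M (Real.sqrt (K / rho)))
        = Real.log (lowerGamma s (X rho)) - Real.log (Real.Gamma s) := by
      rw [hFval, Real.log_div hγpos.ne' hΓ.ne']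
    -- log of lower bound
    have hlogγ_lb : -(X rho) + (s * Real.log (X rho) - Real.log s)
        ≤ Real.log (lowerGamma s (X rho)) := by
      have h1 := Real.log_le_log (by positivity) hγlb
      rw [Real.log_mul (Real.exp_ne_zero _) (by positivity), Real.log_exp,
        Real.log_div (by positivity) hs.ne', Real.log_rpow hxp] at h1
      linarith
    -- log(X rho) in terms of log rho
    have hlogX : Real.log (X rho) = (Real.log K - Real.log rho) / 2 - Real.log phi0 := by
      rw [hX]
      simp only
      rw [Real.log_div (by positivity) hc.ne', Real.log_sqrt (by positivity),
        Real.log_div hK.ne' hrho0.ne']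
    -- conclude
    rw [hlogF]
    have key : -(s/2) + D * (Real.log rho)⁻¹ - X rho * (Real.log rho)⁻¹
        = (-(X rho) + (s * Real.log (X rho) - Real.log s) - Real.log (Real.Gamma s))
          / Real.log rho := by
      rw [hlogX, hD]
      field_simp
      ring
    rw [key]
    gcongr
  · -- upper bound
    filter_upwards [eventually_gt_atTop 1] with rho hrho
    have hrho0 : (0:ℝ) < rho := by linarith
    have hlog : 0 < Real.log rho := Real.log_pos hrho
    have hxp : 0 < X rho := by
      have : 0 < Real.sqrt (K / rho) := Real.sqrt_pos.2 (by positivity)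
      simp only [hX]; positivity
    have hFval : F M (Real.sqrt (K / rho)) = lowerGamma s (X rho) / Real.Gamma s := rfl
    have hγlb := le_lowerGamma s (X rho) hs hxp
    have hγub := lowerGamma_le s (X rho) hs hxp
    have hγpos : 0 < lowerGamma s (X rho) := by
      have : 0 < Real.exp (-(X rho)) * ((X rho) ^ s / s) := by positivity
      linarith
    have hlogF : Real.log (F M (Real.sqrt (K / rho)))
        = Real.log (lowerGamma s (X rho)) - Real.log (Real.Gamma s) := by
      rw [hFval, Real.log_div hγpos.ne' hΓ.ne']
    have hlogγ_ub : Real.log (lowerGamma s (X rho)) ≤ s * Real.log (X rho) - Real.log s := by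
      have h1 := Real.log_le_log hγpos hγub
      rw [Real.log_div (by positivity) hs.ne', Real.log_rpow hxp] at h1
      linarith
    have hlogX : Real.log (X rho) = (Real.log K - Real.log rho) / 2 - Real.log phi0 := by
      rw [hX]
      simp only
      rw [Real.log_div (by positivity) hc.ne', Real.log_sqrt (by positivity),
        Real.log_div hK.ne' hrho0.ne']
    rw [hlogF]
    have key : -(s/2) + D * (Real.log rho)⁻¹
        = (s * Real.log (X rho) - Real.log s - Real.log (Real.Gamma s)) / Real.log rho := by
      rw [hlogX, hD]
      field_simp
      ring
    rw [key]
    gcongr
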